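/- Let μ be a probability distribution on a finite set of d-dimensional vectors and let Σ = E_{A∼μ}[A Aᵀ]. Then for any c > 0, E_{A∼μ}[ √(Aᵀ (I + c Σ)^{-1} A) ] ≤ √(d/c). More precisely, E_{A∼μ}[Aᵀ (I + cΣ)^{-1} A] = (1/c)·tr(I − (I+cΣ)^{-1}) ≤ d/c, and the claim follows by Jensen's inequality. -/

import Mathlib

open Matrix Finset

lemma dot_sum' {d : ℕ} {ι : Type*} [Fintype ι] (x : Fin d → ℝ) (f : ι → Fin d → ℝ) :
    x ⬝ᵥ ∑ j, f j = ∑ j, x ⬝ᵥ f j := by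
  simp only [dotProduct, Finset.sum_apply, Finset.mul_sum]
  exact Finset.sum_comm

lemma trace_mul_vecMulVec' {d : ℕ} (B : Matrix (Fin d) (Fin d) ℝ) (u : Fin d → ℝ) :
    Matrix.trace (B * Matrix.vecMulVec u u) = u ⬝ᵥ (B *ᵥ u) := by
  simp only [Matrix.trace, Matrix.diag_apply, Matrix.mul_apply, Matrix.vecMulVec_apply,
    dotProduct, Matrix.mulVec, Finset.mul_sum]
  exact Finset.sum_congr rfl fun i _ => Finset.sum_congr rfl fun j _ => by ring

lemma wsum_mulVec {d : ℕ} {ι : Type*} [Fintype ι] (w : ι → ℝ) (A : ι → Fin d → ℝ)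
    (x : Fin d → ℝ) :
    (∑ j, w j • Matrix.vecMulVec (A j) (A j)) *ᵥ x
      = ∑ j, (w j * (A j ⬝ᵥ x)) • A j := by
  ext i
  simp only [Matrix.mulVec, dotProduct, Matrix.sum_apply, Matrix.smul_apply,
    Matrix.vecMulVec_apply, smul_eq_mul, Finset.sum_apply, Pi.smul_apply,
    Finset.sum_mul, Finset.mul_sum]
  rw [Finset.sum_comm]
  exact Finset.sum_congr rfl fun j _ => Finset.sum_congr rfl fun k _ => by ring

lemma posSemidef_wsum {d : ℕ} {ι : Type*} [Fintype ι] (w : ι → ℝ) (A : ι → Fin d → ℝ)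
    (hw : ∀ k, 0 ≤ w k) :
    (∑ j, w j • Matrix.vecMulVec (A j) (A j)).PosSemidef := by
  rw [Matrix.posSemidef_iff_dotProduct_mulVec]
  constructor
  · show _ = _
    ext i j
    simp only [Matrix.conjTranspose_apply, Matrix.sum_apply, Matrix.smul_apply,
      Matrix.vecMulVec_apply, smul_eq_mul, star_trivial]
    exact Finset.sum_congr rfl fun k _ => by ring
  · intro x
    rw [star_trivial, wsum_mulVec, dot_sum']
    refine Finset.sum_nonneg fun j _ => ?_
    rw [dotProduct_smul, smul_eq_mul, dotProduct_comm, mul_assoc]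
    exact mul_nonneg (hw j) (mul_self_nonneg _)

lemma posSemidef_trace_nonneg {d : ℕ} {M : Matrix (Fin d) (Fin d) ℝ} (h : M.PosSemidef) :
    0 ≤ Matrix.trace M := by
  refine Finset.sum_nonneg fun i _ => ?_
  have := h.dotProduct_mulVec_nonneg (Pi.single i 1)
  simpa [dotProduct, Matrix.mulVec, Pi.single_apply, Finset.mul_sum] using this


/-- let `μ = (w, A)` be a probability distribution on a finite
family of `d`-dimensional vectors and `Σ = E[A Aᵀ]`. Then
`E[Aᵀ (I + cΣ)⁻¹ A] = (1/c)·tr(I − (I+cΣ)⁻¹) ≤ d/c`, and by Jensen's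
inequality `E[√(Aᵀ (I + cΣ)⁻¹ A)] ≤ √(d/c)`. -/
theorem stmt11 {d : ℕ} {ι : Type*} [Fintype ι]
    (w : ι → ℝ) (A : ι → Fin d → ℝ)
    (hw0 : ∀ k, 0 ≤ w k) (hw1 : ∑ k, w k = 1) (c : ℝ) (hc : 0 < c) :
    (∑ k, w k * (A k ⬝ᵥ ((1 + c • ∑ j, w j • Matrix.vecMulVec (A j) (A j))⁻¹ *ᵥ A k))
        = (1/c) * Matrix.trace
            ((1 : Matrix (Fin d) (Fin d) ℝ)
              - (1 + c • ∑ j, w j • Matrix.vecMulVec (A j) (A j))⁻¹)) ∧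
    (1/c) * Matrix.trace
        ((1 : Matrix (Fin d) (Fin d) ℝ)
          - (1 + c • ∑ j, w j • Matrix.vecMulVec (A j) (A j))⁻¹) ≤ d / c ∧
    ∑ k, w k * Real.sqrt
        (A k ⬝ᵥ ((1 + c • ∑ j, w j • Matrix.vecMulVec (A j) (A j))⁻¹ *ᵥ A k))
      ≤ Real.sqrt (d / c) := by
  set S : Matrix (Fin d) (Fin d) ℝ := ∑ j, w j • Matrix.vecMulVec (A j) (A j) with hSdef
  set M : Matrix (Fin d) (Fin d) ℝ := 1 + c • S with hMdef
  have hS : S.PosSemidef := posSemidef_wsum w A hw0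
  have hcS : (c • S).PosSemidef := by
    refine Matrix.PosSemidef.of_dotProduct_mulVec_nonneg ?_ fun x => ?_
    · show (c • S)ᴴ = c • S
      rw [Matrix.conjTranspose_smul, star_trivial, hS.1]
    rw [Matrix.smul_mulVec, dotProduct_smul, smul_eq_mul]
    exact mul_nonneg hc.le (hS.dotProduct_mulVec_nonneg x)
  have hM : M.PosDef := Matrix.PosDef.add_posSemidef Matrix.PosDef.one hcS
  have hdet : IsUnit M.det := hM.det_pos.ne'.isUnit
  have hinvmul : M⁻¹ * M = 1 := Matrix.nonsing_inv_mul M hdet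
  have hMinv : M⁻¹.PosSemidef := hM.inv.posSemidef
  -- part 1
  have part1 : ∑ k, w k * (A k ⬝ᵥ M⁻¹ *ᵥ A k)
      = (1/c) * Matrix.trace ((1 : Matrix (Fin d) (Fin d) ℝ) - M⁻¹) := by
    have step1 : ∑ k, w k * (A k ⬝ᵥ M⁻¹ *ᵥ A k) = Matrix.trace (M⁻¹ * S) := by
      rw [hSdef, Finset.mul_sum, Matrix.trace_sum]
      refine Finset.sum_congr rfl fun k _ => ?_
      rw [Matrix.mul_smul, Matrix.trace_smul, smul_eq_mul, trace_mul_vecMulVec']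
    have hcSM : c • S = M - 1 := by rw [hMdef, add_sub_cancel_left]
    have step2 : M⁻¹ * S = (1/c) • ((1 : Matrix (Fin d) (Fin d) ℝ) - M⁻¹) := by
      have : M⁻¹ * (c • S) = (1 : Matrix (Fin d) (Fin d) ℝ) - M⁻¹ := by
        rw [hcSM, Matrix.mul_sub, hinvmul, Matrix.mul_one]
      rw [Matrix.mul_smul] at this
      calc M⁻¹ * S = (1/c) • (c • (M⁻¹ * S)) := by
            rw [smul_smul, one_div, inv_mul_cancel₀ hc.ne', one_smul]
        _ = (1/c) • ((1 : Matrix (Fin d) (Fin d) ℝ) - M⁻¹) := by rw [this]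
    rw [step1, step2, Matrix.trace_smul, smul_eq_mul]
  have part2 : (1/c) * Matrix.trace ((1 : Matrix (Fin d) (Fin d) ℝ) - M⁻¹) ≤ d / c := by
    have h1 : Matrix.trace ((1 : Matrix (Fin d) (Fin d) ℝ) - M⁻¹) ≤ d := by
      rw [Matrix.trace_sub, Matrix.trace_one]
      have := posSemidef_trace_nonneg hMinv
      simp only [Finset.card_univ, Fintype.card_fin]
      linarith
    calc (1/c) * Matrix.trace ((1 : Matrix (Fin d) (Fin d) ℝ) - M⁻¹) ≤ (1/c) * d := by
          exact mul_le_mul_of_nonneg_left h1 (by positivity)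
      _ = d / c := by ring
  refine ⟨part1, part2, ?_⟩
  -- part 3
  have hx : ∀ k, 0 ≤ A k ⬝ᵥ M⁻¹ *ᵥ A k := fun k => by simpa using hMinv.dotProduct_mulVec_nonneg (A k)
  have hsum_le : ∑ k, w k * (A k ⬝ᵥ M⁻¹ *ᵥ A k) ≤ d / c := part1 ▸ part2
  have hnn : 0 ≤ ∑ k, w k * Real.sqrt (A k ⬝ᵥ M⁻¹ *ᵥ A k) :=
    Finset.sum_nonneg fun k _ => mul_nonneg (hw0 k) (Real.sqrt_nonneg _)
  have hCS : (∑ k, w k * Real.sqrt (A k ⬝ᵥ M⁻¹ *ᵥ A k)) ^ 2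
      ≤ (∑ k, w k) * ∑ k, w k * (A k ⬝ᵥ M⁻¹ *ᵥ A k) := by
    refine Finset.sum_sq_le_sum_mul_sum_of_sq_eq_mul Finset.univ
      (fun k _ => hw0 k) (fun k _ => mul_nonneg (hw0 k) (hx k)) (fun k _ => ?_)
    rw [mul_pow, Real.sq_sqrt (hx k)]
    ring
  rw [hw1, one_mul] at hCS
  have : (∑ k, w k * Real.sqrt (A k ⬝ᵥ M⁻¹ *ᵥ A k)) ^ 2 ≤ d / c := hCS.trans hsum_le
  calc ∑ k, w k * Real.sqrt (A k ⬝ᵥ M⁻¹ *ᵥ A k)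
      = Real.sqrt ((∑ k, w k * Real.sqrt (A k ⬝ᵥ M⁻¹ *ᵥ A k)) ^ 2) :=
        (Real.sqrt_sq hnn).symm
    _ ≤ Real.sqrt (d / c) := Real.sqrt_le_sqrt this
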